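/- Let P > 0 and let k : [0,P] → ℝ be Lebesgue-integrable with k(x) ≥ 1 for almost every x ∈ [0,P]. Then (∫₀^P √(k(x)² − 1) dx)² ≤ (∫₀^P k(x) dx)² − P². -/

import Mathlib

open MeasureTheory Real Set

/-- The Cauchy–Schwarz step for the hyperbolic billiard bound:
if `k ≥ 1` a.e. on `[0,P]`, then `(∫₀^P √(k² − 1))² ≤ (∫₀^P k)² − P²`. -/
theorem sq_integral_sqrt_sq_sub_one_le (P : ℝ) (hP : 0 < P) (k : ℝ → ℝ)
    (hk : IntegrableOn k (Icc (0 : ℝ) P) volume)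
    (hk1 : ∀ᵐ x ∂(volume.restrict (Icc (0 : ℝ) P)), 1 ≤ k x) :
    (∫ x in (0 : ℝ)..P, Real.sqrt (k x ^ 2 - 1)) ^ 2 ≤
      (∫ x in (0 : ℝ)..P, k x) ^ 2 - P ^ 2 := by
  set μ := volume.restrict (Icc (0 : ℝ) P) with hμ
  have hμfin : μ (Set.univ) < ⊤ := by
    rw [hμ, Measure.restrict_apply_univ]
    exact measure_Icc_lt_top
  -- interval integrals equal integrals over Icc
  have hIoc : (∫ x in (0 : ℝ)..P, Real.sqrt (k x ^ 2 - 1)) =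
      ∫ x, Real.sqrt (k x ^ 2 - 1) ∂μ := by
    rw [intervalIntegral.integral_of_le hP.le, hμ, ← integral_Icc_eq_integral_Ioc]
  have hIock : (∫ x in (0 : ℝ)..P, k x) = ∫ x, k x ∂μ := by
    rw [intervalIntegral.integral_of_le hP.le, hμ, ← integral_Icc_eq_integral_Ioc]
  rw [hIoc, hIock]
  set f := fun x => Real.sqrt (k x - 1) with hf
  set g := fun x => Real.sqrt (k x + 1) with hg
  have hkm : AEStronglyMeasurable k μ := hk.aestronglyMeasurable
  have hfm : AEStronglyMeasurable f μ :=
    Real.continuous_sqrt.comp_aestronglyMeasurable (hkm.sub aestronglyMeasurable_const)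
  have hgm : AEStronglyMeasurable g μ :=
    Real.continuous_sqrt.comp_aestronglyMeasurable (hkm.add aestronglyMeasurable_const)
  have hconst : Integrable (fun _ : ℝ => (1 : ℝ)) μ := integrable_const _
  have hksub : Integrable (fun x => k x - 1) μ := hk.sub hconst
  have hkadd : Integrable (fun x => k x + 1) μ := hk.add hconst
  have hf2 : (fun x => f x ^ 2) =ᵐ[μ] fun x => k x - 1 := by
    filter_upwards [hk1] with x hx
    simp only [hf]
    rw [Real.sq_sqrt (by linarith)]
  have hg2 : (fun x => g x ^ 2) =ᵐ[μ] fun x => k x + 1 := by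
    filter_upwards [hk1] with x hx
    simp only [hg]
    rw [Real.sq_sqrt (by linarith)]
  have hfL2 : MemLp f 2 μ :=
    (memLp_two_iff_integrable_sq hfm).2 (hksub.congr hf2.symm)
  have hgL2 : MemLp g 2 μ :=
    (memLp_two_iff_integrable_sq hgm).2 (hkadd.congr hg2.symm)
  have hpq : (2 : ℝ).HolderConjugate 2 := by
    constructor <;> norm_num
  have hfnn : 0 ≤ᵐ[μ] f := Filter.Eventually.of_forall fun x => Real.sqrt_nonneg _
  have hgnn : 0 ≤ᵐ[μ] g := Filter.Eventually.of_forall fun x => Real.sqrt_nonneg _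
  have hCS := integral_mul_le_Lp_mul_Lq_of_nonneg (μ := μ) hpq hfnn hgnn
    (by simpa using hfL2) (by simpa using hgL2)
  -- identify the pieces
  have hfg : (fun x => f x * g x) =ᵐ[μ] fun x => Real.sqrt (k x ^ 2 - 1) := by
    filter_upwards [hk1] with x hx
    simp only [hf, hg]
    rw [← Real.sqrt_mul (by linarith)]
    ring_nf
  have hrp : ∀ y : ℝ, 0 ≤ y → y ^ (2 : ℝ) = y ^ (2 : ℕ) := fun y hy => by
    rw [← Real.rpow_natCast y 2]; norm_num
  have hintf2 : (∫ a, f a ^ (2 : ℝ) ∂μ) = ∫ x, k x ∂μ - P := by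
    have : (∫ a, f a ^ (2 : ℝ) ∂μ) = ∫ x, (k x - 1) ∂μ := by
      refine integral_congr_ae ?_
      filter_upwards [hf2] with x hx
      rw [hrp _ (Real.sqrt_nonneg _)]
      exact hx
    rw [this, integral_sub hk hconst]
    simp [hμ, Real.volume_Icc, hP.le]
  have hintg2 : (∫ a, g a ^ (2 : ℝ) ∂μ) = ∫ x, k x ∂μ + P := by
    have : (∫ a, g a ^ (2 : ℝ) ∂μ) = ∫ x, (k x + 1) ∂μ := by
      refine integral_congr_ae ?_
      filter_upwards [hg2] with x hx
      rw [hrp _ (Real.sqrt_nonneg _)]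
      exact hx
    rw [this, integral_add hk hconst]
    simp [hμ, Real.volume_Icc, hP.le]
  rw [integral_congr_ae hfg, hintf2, hintg2] at hCS
  set I := ∫ x, k x ∂μ with hI
  have hIP : P ≤ I := by
    have h1 : (∫ _, (1 : ℝ) ∂μ) ≤ I := integral_mono_ae hconst hk hk1
    have : (∫ _, (1 : ℝ) ∂μ) = P := by
      simp [hμ, Real.volume_Icc, hP.le]
    linarith
  have hAnn : 0 ≤ ∫ x, Real.sqrt (k x ^ 2 - 1) ∂μ :=
    integral_nonneg fun x => Real.sqrt_nonneg _
  have hsqrt : (I - P) ^ ((1 : ℝ)/2) * (I + P) ^ ((1:ℝ)/2) =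
      Real.sqrt ((I - P) * (I + P)) := by
    rw [Real.sqrt_mul (by linarith), Real.sqrt_eq_rpow, Real.sqrt_eq_rpow]
  rw [hsqrt] at hCS
  have := (Real.le_sqrt hAnn (by nlinarith)).1 hCS
  nlinarith [this]
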